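/- Let a, b, c be positive real numbers satisfying the strict triangle inequalities a < b + c, b < a + c, c < a + b. For λ > 0 let α(λ) ≥ 0 be the unique nonnegative real with cosh(α(λ)) = (cosh(λa) + cosh(λb)·cosh(λc)) / (sinh(λb)·sinh(λc)) (this right-hand side is always > 1, so α(λ) is well defined and positive). Then lim_{λ→∞} α(λ)·exp(λ(b + c − a)/2) = 2. In particular α(λ) → 0 exponentially fast, with (1/λ)·log α(λ) → −(b + c − a)/2. -/

import Mathlib

open Real Filter Topology

set_option maxHeartbeats 1000000 in
lemma hexagon_aux_identity (x y z : ℝ) (hx : 0 < x) (hy1 : 1 < y) (hz1 : 1 < z) :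
    2 * (1 + (x * x)⁻¹ + y / (z * x) + z / (y * x)) /
        ((1 - (y * y)⁻¹) * (1 - (z * z)⁻¹))
      = (((x + x⁻¹) / 2 + (y + y⁻¹) / 2 * ((z + z⁻¹) / 2)) /
          ((y - y⁻¹) / 2 * ((z - z⁻¹) / 2)) - 1) * (y * z / x) := by
  have hy : (0:ℝ) < y := by linarith
  have hz : (0:ℝ) < z := by linarith
  have py : y * y - 1 ≠ 0 := ne_of_gt (by nlinarith)
  have pz : z * z - 1 ≠ 0 := ne_of_gt (by nlinarith)
  have r1 : 1 - (y * y)⁻¹ = (y * y - 1) / (y * y) := by field_simp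
  have r2 : 1 - (z * z)⁻¹ = (z * z - 1) / (z * z) := by field_simp
  have r3 : y - y⁻¹ = (y * y - 1) / y := by field_simp
  have r4 : z - z⁻¹ = (z * z - 1) / z := by field_simp
  have r5 : x + x⁻¹ = (x * x + 1) / x := by field_simp
  have r6 : y + y⁻¹ = (y * y + 1) / y := by field_simp
  have r7 : z + z⁻¹ = (z * z + 1) / z := by field_simp
  rw [r1, r2, r3, r4, r5, r6, r7]
  rw [div_sub_one (by positivity)]
  field_simp
  ring

/-- Asymptotics of the hexagon side from the cosine rule for right-angled hexagons:
if `a, b, c > 0` satisfy the strict triangle inequalities and `α L ≥ 0` is defined by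
`cosh (α L) = (cosh (L·a) + cosh (L·b)·cosh (L·c)) / (sinh (L·b)·sinh (L·c))` for `L > 0`,
then `α L · exp (L·(b + c − a)/2) → 2` as `L → ∞`; in particular `α L → 0` exponentially
fast, with `(1/L)·log (α L) → −(b + c − a)/2`. -/
theorem hexagon_side_asymptotics (a b c : ℝ) (ha : 0 < a) (hb : 0 < b) (hc : 0 < c)
    (tri₁ : a < b + c) (tri₂ : b < a + c) (tri₃ : c < a + b)
    (α : ℝ → ℝ)
    (hα : ∀ L : ℝ, 0 < L → 0 ≤ α L ∧
      Real.cosh (α L) =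
        (Real.cosh (L * a) + Real.cosh (L * b) * Real.cosh (L * c)) /
          (Real.sinh (L * b) * Real.sinh (L * c))) :
    Filter.Tendsto (fun L : ℝ => α L * Real.exp (L * (b + c - a) / 2))
        Filter.atTop (nhds 2) ∧
      Filter.Tendsto (fun L : ℝ => Real.log (α L) / L)
        Filter.atTop (nhds (-(b + c - a) / 2)) := by
  set ε : ℝ := (b + c - a) / 2 with hεdef
  have hε : 0 < ε := by simp only [hεdef]; linarith
  set R : ℝ → ℝ := fun L => (Real.cosh (L * a) + Real.cosh (L * b) * Real.cosh (L * c)) /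
      (Real.sinh (L * b) * Real.sinh (L * c)) with hRdef
  have hD : ∀ L : ℝ, 0 < L → 0 < Real.sinh (L * b) * Real.sinh (L * c) := fun L hL =>
    mul_pos (Real.sinh_pos_iff.2 (mul_pos hL hb)) (Real.sinh_pos_iff.2 (mul_pos hL hc))
  have hR1 : ∀ L : ℝ, 0 < L → 1 < R L := by
    intro L hL
    simp only [hRdef]
    rw [lt_div_iff₀ (hD L hL)]
    have h1 := Real.cosh_sub (L * b) (L * c)
    have h2 := Real.cosh_pos (L * a)
    have h3 := Real.cosh_pos (L * b - L * c)
    nlinarith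
  -- exponential decay helper
  have neg : ∀ k : ℝ, k < 0 → Tendsto (fun L : ℝ => Real.exp (L * k)) atTop (𝓝 0) := by
    intro k hk
    exact Real.tendsto_exp_atBot.comp (tendsto_id.atTop_mul_const_of_neg hk)
  -- key limit: (R L - 1) * exp (L * (b + c - a)) → 2
  have key : Tendsto (fun L => (R L - 1) * Real.exp (L * (b + c - a))) atTop (𝓝 2) := by
    have heq : (fun L : ℝ => (2 : ℝ) * (1 + Real.exp (L * (-(2 * a)))
          + Real.exp (L * (b - c - a)) + Real.exp (L * (c - b - a))) /
        ((1 - Real.exp (L * (-(2 * b)))) * (1 - Real.exp (L * (-(2 * c))))))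
        =ᶠ[atTop] (fun L => (R L - 1) * Real.exp (L * (b + c - a))) := by
      filter_upwards [eventually_gt_atTop (0 : ℝ)] with L hL
      have hX := Real.exp_pos (L * a)
      have e1 : Real.exp (L * (b + c - a))
          = Real.exp (L * b) * Real.exp (L * c) / Real.exp (L * a) := by
        rw [← Real.exp_add, ← Real.exp_sub]; congr 1; ring
      have e2 : Real.exp (L * (-(2 * a))) = (Real.exp (L * a) * Real.exp (L * a))⁻¹ := by
        rw [← Real.exp_add, ← Real.exp_neg]; congr 1; ring
      have e3 : Real.exp (L * (b - c - a))
          = Real.exp (L * b) / (Real.exp (L * c) * Real.exp (L * a)) := by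
        rw [← Real.exp_add, ← Real.exp_sub]; congr 1; ring
      have e4 : Real.exp (L * (c - b - a))
          = Real.exp (L * c) / (Real.exp (L * b) * Real.exp (L * a)) := by
        rw [← Real.exp_add, ← Real.exp_sub]; congr 1; ring
      have e5 : Real.exp (L * (-(2 * b))) = (Real.exp (L * b) * Real.exp (L * b))⁻¹ := by
        rw [← Real.exp_add, ← Real.exp_neg]; congr 1; ring
      have e6 : Real.exp (L * (-(2 * c))) = (Real.exp (L * c) * Real.exp (L * c))⁻¹ := by
        rw [← Real.exp_add, ← Real.exp_neg]; congr 1; ring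
      have s1 : Real.sinh (L * b) = (Real.exp (L * b) - (Real.exp (L * b))⁻¹) / 2 := by
        rw [Real.sinh_eq, Real.exp_neg]
      have s2 : Real.sinh (L * c) = (Real.exp (L * c) - (Real.exp (L * c))⁻¹) / 2 := by
        rw [Real.sinh_eq, Real.exp_neg]
      have c1 : Real.cosh (L * a) = (Real.exp (L * a) + (Real.exp (L * a))⁻¹) / 2 := by
        rw [Real.cosh_eq, Real.exp_neg]
      have c2 : Real.cosh (L * b) = (Real.exp (L * b) + (Real.exp (L * b))⁻¹) / 2 := by
        rw [Real.cosh_eq, Real.exp_neg]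
      have c3 : Real.cosh (L * c) = (Real.exp (L * c) + (Real.exp (L * c))⁻¹) / 2 := by
        rw [Real.cosh_eq, Real.exp_neg]
      simp only [hRdef]
      rw [e1, e2, e3, e4, e5, e6, s1, s2, c1, c2, c3]
      exact hexagon_aux_identity _ _ _ hX
        (Real.one_lt_exp_iff.2 (mul_pos hL hb)) (Real.one_lt_exp_iff.2 (mul_pos hL hc))
    have hlim : Tendsto (fun L : ℝ => (2 : ℝ) * (1 + Real.exp (L * (-(2 * a)))
          + Real.exp (L * (b - c - a)) + Real.exp (L * (c - b - a))) /
        ((1 - Real.exp (L * (-(2 * b)))) * (1 - Real.exp (L * (-(2 * c))))))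
        atTop (𝓝 2) := by
      have h1 := neg (-(2 * a)) (by linarith)
      have h2 := neg (b - c - a) (by linarith)
      have h3 := neg (c - b - a) (by linarith)
      have h4 := neg (-(2 * b)) (by linarith)
      have h5 := neg (-(2 * c)) (by linarith)
      have hnum : Tendsto (fun L : ℝ => (2 : ℝ) * (1 + Real.exp (L * (-(2 * a)))
            + Real.exp (L * (b - c - a)) + Real.exp (L * (c - b - a))))
          atTop (𝓝 ((2:ℝ) * (1 + 0 + 0 + 0))) :=
        tendsto_const_nhds.mul (((tendsto_const_nhds.add h1).add h2).add h3)
      have hden : Tendsto (fun L : ℝ =>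
            (1 - Real.exp (L * (-(2 * b)))) * (1 - Real.exp (L * (-(2 * c)))))
          atTop (𝓝 (((1:ℝ) - 0) * (1 - 0))) :=
        (tendsto_const_nhds.sub h4).mul (tendsto_const_nhds.sub h5)
      have h := hnum.div hden (by norm_num)
      rw [show (2:ℝ) * (1 + 0 + 0 + 0) / (((1:ℝ) - 0) * (1 - 0)) = 2 by norm_num] at h
      exact h
    exact hlim.congr' heq
  -- R tends to 1
  have hRlim : Tendsto R atTop (𝓝 1) := by
    have h := (key.mul (neg (-(b + c - a)) (by linarith))).add
      (tendsto_const_nhds (α := ℝ) (x := (1:ℝ)))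
    rw [show (2:ℝ) * 0 + 1 = 1 by norm_num] at h
    refine h.congr fun L => ?_
    have : Real.exp (L * (b + c - a)) * Real.exp (L * (-(b + c - a))) = 1 := by
      rw [← Real.exp_add]
      norm_num [← Real.exp_zero]
      ring
    calc (R L - 1) * Real.exp (L * (b + c - a)) * Real.exp (L * (-(b + c - a))) + 1
        = (R L - 1) * (Real.exp (L * (b + c - a)) * Real.exp (L * (-(b + c - a)))) + 1 := by ring
      _ = R L := by rw [this]; ring
  -- T L := sqrt (R L ^ 2 - 1)
  set T : ℝ → ℝ := fun L => Real.sqrt (R L ^ 2 - 1) with hTdef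
  have hTpos : ∀ L : ℝ, 0 < L → 0 < T L := by
    intro L hL
    apply Real.sqrt_pos.2
    have := hR1 L hL
    nlinarith
  -- T L * exp (L * ε) → 2
  have hT2 : Tendsto (fun L => T L * Real.exp (L * ε)) atTop (𝓝 2) := by
    have inner : Tendsto (fun L => (R L - 1) * Real.exp (L * (b + c - a)) * (R L + 1))
        atTop (𝓝 4) := by
      have h := key.mul (hRlim.add (tendsto_const_nhds (α := ℝ) (x := (1:ℝ))))
      rw [show (2:ℝ) * (1 + 1) = 4 by norm_num] at h
      exact h
    have hs : Tendsto (fun L => Real.sqrt ((R L - 1) * Real.exp (L * (b + c - a)) * (R L + 1)))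
        atTop (𝓝 2) := by
      have h4 : Real.sqrt 4 = 2 := by
        rw [show (4:ℝ) = 2 ^ 2 by norm_num, Real.sqrt_sq (by norm_num)]
      have := (Real.continuous_sqrt.tendsto 4).comp inner
      rwa [h4] at this
    refine hs.congr' ?_
    filter_upwards [eventually_gt_atTop (0 : ℝ)] with L hL
    have hR1L := hR1 L hL
    have hnn : (0:ℝ) ≤ R L ^ 2 - 1 := by nlinarith
    have hexpsq : Real.exp (L * ε) ^ 2 = Real.exp (L * (b + c - a)) := by
      rw [sq, ← Real.exp_add]
      congr 1
      simp only [hεdef]; ring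
    have harg : (R L - 1) * Real.exp (L * (b + c - a)) * (R L + 1)
        = (R L ^ 2 - 1) * Real.exp (L * ε) ^ 2 := by
      rw [hexpsq]; ring
    rw [harg, Real.sqrt_mul hnn, Real.sqrt_sq (Real.exp_pos _).le]
  -- T tends to 0
  have hT0 : Tendsto T atTop (𝓝 0) := by
    have h := hT2.mul (neg (-ε) (by linarith))
    rw [show (2:ℝ) * 0 = 0 by norm_num] at h
    refine h.congr fun L => ?_
    have h1 : Real.exp (L * ε) * Real.exp (L * (-ε)) = 1 := by
      rw [← Real.exp_add, show L * ε + L * (-ε) = 0 by ring, Real.exp_zero]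
    calc T L * Real.exp (L * ε) * Real.exp (L * (-ε))
        = T L * (Real.exp (L * ε) * Real.exp (L * (-ε))) := by ring
      _ = T L := by rw [h1, mul_one]
  -- α L = arsinh (T L) for L > 0
  have hαeq : ∀ L : ℝ, 0 < L → α L = Real.arsinh (T L) := by
    intro L hL
    obtain ⟨h0, hcosh⟩ := hα L hL
    have hcosh' : Real.cosh (α L) = R L := by rw [hRdef]; exact hcosh
    have hsinh : Real.sinh (α L) = T L := by
      have hsq : Real.sinh (α L) ^ 2 = R L ^ 2 - 1 := by
        have h := Real.cosh_sq (α L)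
        rw [hcosh'] at h
        linarith
      have hTval : T L = Real.sqrt (Real.sinh (α L) ^ 2) := by
        simp only [hTdef, hsq]
      rw [hTval, Real.sqrt_sq (Real.sinh_nonneg_iff.2 h0)]
    rw [← hsinh, Real.arsinh_sinh]
  -- arsinh t / t → 1 as t → 0, t ≠ 0
  have hslope : Tendsto (fun t : ℝ => Real.arsinh t / t) (𝓝[≠] (0:ℝ)) (𝓝 1) := by
    have h := Real.hasDerivAt_arsinh 0
    rw [hasDerivAt_iff_tendsto_slope] at h
    have h1 : (Real.sqrt (1 + (0:ℝ) ^ 2))⁻¹ = (1:ℝ) := by norm_num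
    rw [h1] at h
    refine h.congr fun t => ?_
    simp [slope_def_field, Real.arsinh_zero]
  have hTne : Tendsto T atTop (𝓝[≠] (0:ℝ)) := by
    rw [tendsto_nhdsWithin_iff]
    refine ⟨hT0, ?_⟩
    filter_upwards [eventually_gt_atTop (0:ℝ)] with L hL using (hTpos L hL).ne'
  have hcomp : Tendsto (fun L => Real.arsinh (T L) / T L) atTop (𝓝 1) := hslope.comp hTne
  -- first main limit
  have main1 : Tendsto (fun L : ℝ => α L * Real.exp (L * ε)) atTop (𝓝 2) := by
    have h := hcomp.mul hT2
    rw [show (1:ℝ) * 2 = 2 by norm_num] at h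
    refine h.congr' ?_
    filter_upwards [eventually_gt_atTop (0:ℝ)] with L hL
    rw [hαeq L hL]
    have hne := (hTpos L hL).ne'
    field_simp
  have goal1 : Tendsto (fun L : ℝ => α L * Real.exp (L * (b + c - a) / 2)) atTop (𝓝 2) := by
    refine main1.congr fun L => ?_
    congr 2
    simp only [hεdef]; ring
  refine ⟨goal1, ?_⟩
  -- second main limit
  have hαpos : ∀ L : ℝ, 0 < L → 0 < α L := by
    intro L hL
    obtain ⟨h0, hcosh⟩ := hα L hL
    rcases h0.lt_or_eq with h | h
    · exact h
    · exfalso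
      have hcosh' : Real.cosh (α L) = R L := by rw [hRdef]; exact hcosh
      rw [← h, Real.cosh_zero] at hcosh'
      have := hR1 L hL
      linarith
  have hlog : Tendsto (fun L => Real.log (α L * Real.exp (L * ε))) atTop (𝓝 (Real.log 2)) :=
    (Real.continuousAt_log (by norm_num)).tendsto.comp main1
  have hdiv : Tendsto (fun L => Real.log (α L * Real.exp (L * ε)) / L) atTop (𝓝 0) :=
    hlog.div_atTop tendsto_id
  have h := hdiv.sub (tendsto_const_nhds (α := ℝ) (x := ε))
  have hval : (0:ℝ) - ε = -(b + c - a) / 2 := by simp only [hεdef]; ring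
  rw [hval] at h
  refine h.congr' ?_
  filter_upwards [eventually_gt_atTop (0:ℝ)] with L hL
  rw [Real.log_mul (hαpos L hL).ne' (Real.exp_ne_zero _), Real.log_exp]
  field_simp
  ring
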